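/- Let $A$ and $B$ be unital C*-algebras and let $\zeta : \mathbb{C}(A) \to \mathbb{C}(B)$ be a map from the normal elements of $A$ to the normal elements of $B$ which: preserves commuting products and sums (if $\alpha\beta = \beta\alpha$ then $\zeta(\alpha\beta) = \zeta(\alpha)\zeta(\beta)$ and $\zeta(\alpha+\beta) = \zeta(\alpha)+\zeta(\beta)$), is $\mathbb{C}$-homogeneous, involutive, unital, additive on all pairs of self-adjoint elements, and multiplicative on all pairs of unitary elements. Then $\zeta$ extends to a unital $*$-homomorphism $\hat{\zeta} : A \to B$, given by $\hat{\zeta}(a + ib) = \zeta(a) + i\zeta(b)$ for self-adjoint $a, b$. -/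

import Mathlib

open ComplexStarModule Complex

section aux
variable {A : Type*} [NormedRing A] [StarRing A] [CStarRing A] [NormedAlgebra ℂ A]
  [StarModule ℂ A] [CompleteSpace A]

lemma aux_exists_unitary {a : A} (ha : IsSelfAdjoint a) (h2 : ‖a‖ ≤ 2) :
    ∃ u ∈ unitary A, a = u + star u := by
  letI : CStarAlgebra A := ⟨⟩
  rcases subsingleton_or_nontrivial A with hS|hS
  · exact ⟨1, one_mem _, Subsingleton.elim _ _⟩
  have hnorm : IsStarNormal a := ha.isStarNormal
  set f : ℂ → ℂ := fun z => ((z.re/2 : ℝ) : ℂ) + ((Real.sqrt (1 - z.re^2/4) : ℝ) : ℂ) * Complex.I with hf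
  have hcont : Continuous f := by fun_prop
  have hre : ∀ x ∈ spectrum ℂ a, |x.re| ≤ 2 ∧ x = x.re := by
    intro x hx
    refine ⟨?_, ha.mem_spectrum_eq_re hx⟩
    have h1 := spectrum.norm_le_norm_of_mem hx
    calc |x.re| ≤ ‖x‖ := Complex.abs_re_le_norm x
      _ ≤ 2 := le_trans h1 h2
  refine ⟨cfc f a, ?_, ?_⟩
  · rw [cfc_unitary_iff f a hnorm hcont.continuousOn]
    intro x hx
    obtain ⟨hxre, -⟩ := hre x hx
    obtain ⟨hx1, hx2⟩ := abs_le.mp hxre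
    have hnn : 0 ≤ 1 - x.re^2/4 := by nlinarith
    have hsq : Real.sqrt (1 - x.re^2/4) ^ 2 = 1 - x.re^2/4 := Real.sq_sqrt hnn
    have hstarf : star (f x) = ((x.re/2 : ℝ) : ℂ) - ((Real.sqrt (1 - x.re^2/4) : ℝ) : ℂ) * Complex.I := by
      simp [hf, Complex.ext_iff]
    rw [hstarf]
    simp only [hf]
    have h2' : (((Real.sqrt (1 - x.re^2/4) : ℝ) : ℂ))^2 = ((1 - x.re^2/4 : ℝ) : ℂ) := by
      rw [← Complex.ofReal_pow, hsq]
    have hI : (Complex.I)^2 = -1 := Complex.I_sq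
    push_cast at h2' ⊢
    linear_combination (-Complex.I^2) * h2' + ((x.re:ℂ)^2/4 - 1) * Complex.I_sq
  · have h1 : star (cfc f a) = cfc (fun z => star (f z)) a := (cfc_star f a).symm
    rw [h1, ← cfc_add (a := a) f (fun z => star (f z)) hcont.continuousOn (by fun_prop)]
    have : a = cfc (id : ℂ → ℂ) a := (cfc_id ℂ a).symm
    conv_lhs => rw [this]
    apply cfc_congr
    intro x hx
    obtain ⟨hxre, hxeq⟩ := hre x hx
    simp only [hf, id_eq]
    rw [hxeq]
    simp [Complex.ext_iff]

end aux



/-- A piecewise `*`-homomorphism `ζ` from the normal part of `A` to the normal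
part of `B` (preserving commuting products and sums, `ℂ`-homogeneous, involutive, unital)
which is additive on all pairs of self-adjoints and multiplicative on all pairs of unitaries
extends to a unital `*`-homomorphism `A → B`, given by `a + ib ↦ ζ a + i ζ b` on
self-adjoint `a, b`. -/
theorem stmt7 (A B : Type*)
    [NormedRing A] [StarRing A] [CStarRing A] [NormedAlgebra ℂ A] [StarModule ℂ A]
    [CompleteSpace A]
    [NormedRing B] [StarRing B] [CStarRing B] [NormedAlgebra ℂ B] [StarModule ℂ B]
    [CompleteSpace B]
    (ζ : A → B)
    (hnormal : ∀ a : A, IsStarNormal a → IsStarNormal (ζ a))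
    (hmul : ∀ a b : A, IsStarNormal a → IsStarNormal b → Commute a b →
      ζ (a * b) = ζ a * ζ b)
    (hadd : ∀ a b : A, IsStarNormal a → IsStarNormal b → Commute a b →
      ζ (a + b) = ζ a + ζ b)
    (hsmul : ∀ (c : ℂ) (a : A), IsStarNormal a → ζ (c • a) = c • ζ a)
    (hstar : ∀ a : A, IsStarNormal a → ζ (star a) = star (ζ a))
    (hone : ζ 1 = 1)
    (hsa : ∀ a b : A, IsSelfAdjoint a → IsSelfAdjoint b → ζ (a + b) = ζ a + ζ b)
    (huni : ∀ u v : A, u ∈ unitary A → v ∈ unitary A → ζ (u * v) = ζ u * ζ v) :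
    ∃ φ : A →⋆ₐ[ℂ] B,
      (∀ a : A, IsStarNormal a → φ a = ζ a) ∧
      (∀ a b : A, IsSelfAdjoint a → IsSelfAdjoint b →
        φ (a + Complex.I • b) = ζ a + Complex.I • ζ b) := by
  -- basic facts
  have hζ0 : ζ 0 = 0 := by
    have := hsmul 0 0 (by exact IsStarNormal.zero)
    simpa using this
  have hζsa : ∀ a : A, IsSelfAdjoint a → IsSelfAdjoint (ζ a) := by
    intro a haA
    have h := hstar a haA.isStarNormal
    rw [haA.star_eq] at h
    exact h.symm
  have hζneg : ∀ a : A, IsStarNormal a → ζ (-a) = - ζ a := by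
    intro a haA
    have := hsmul (-1) a haA
    simpa using this
  have hrsmul : ∀ (r : ℝ) (a : A), IsStarNormal a → ζ (r • a) = r • ζ a := by
    intro r a haA
    rw [← Complex.coe_smul, hsmul _ _ haA, Complex.coe_smul]
  -- the candidate map
  set φ : A → B := fun x => ζ (ℜ x) + Complex.I • ζ (ℑ x) with hφdef
  have φadd : ∀ x y : A, φ (x + y) = φ x + φ y := by
    intro x y
    simp only [hφdef, map_add, AddSubgroup.coe_add]
    rw [hsa _ _ (ℜ x).2 (ℜ y).2, hsa _ _ (ℑ x).2 (ℑ y).2, smul_add]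
    abel
  have φsa : ∀ a : A, IsSelfAdjoint a → φ a = ζ a := by
    intro a haA
    simp [hφdef, haA.coe_realPart, haA.imaginaryPart, hζ0]
  have φkey : ∀ a b : A, IsSelfAdjoint a → IsSelfAdjoint b →
      φ (a + Complex.I • b) = ζ a + Complex.I • ζ b := by
    intro a b haA hbA
    rw [φadd, φsa a haA]
    congr 1
    simp [hφdef, realPart_I_smul, imaginaryPart_I_smul, hbA.imaginaryPart, hζ0,
      hbA.coe_realPart]
  have hIsm_normal : ∀ a : A, IsSelfAdjoint a → IsStarNormal (Complex.I • a) := by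
    intro a haA
    constructor
    have hst : star (Complex.I • a) = -(Complex.I • a) := by
      rw [star_smul, haA.star_eq, Complex.star_def, Complex.conj_I, neg_smul]
    rw [hst]
    exact (Commute.refl _).neg_left
  have φnormal : ∀ a : A, IsStarNormal a → φ a = ζ a := by
    intro a haA
    have hcomm0 : Commute (a + star a) (a - star a) :=
      (((Commute.refl a).sub_right haA.star_comm_self.symm).add_left
        ((haA.star_comm_self).sub_right (Commute.refl (star a))))
    have hcomm : Commute ((ℜ a : A)) ((ℑ a : A)) := by
      rw [realPart_apply_coe, imaginaryPart_apply_coe]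
      exact (((hcomm0.smul_right ((2:ℝ)⁻¹)).smul_right (-Complex.I)).smul_left ((2:ℝ)⁻¹))
    have hcommI : Commute ((ℜ a : A)) (Complex.I • (ℑ a : A)) := hcomm.smul_right _
    have hz : ζ a = ζ (ℜ a) + Complex.I • ζ (ℑ a) := by
      conv_lhs => rw [← realPart_add_I_smul_imaginaryPart a]
      rw [hadd _ _ (ℜ a).2.isStarNormal (hIsm_normal _ (ℑ a).2) hcommI,
        hsmul _ _ (ℑ a).2.isStarNormal]
    rw [hz]
  have φ0 : φ 0 = 0 := by simp [hφdef, hζ0]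
  have φI : ∀ x : A, φ (Complex.I • x) = Complex.I • φ x := by
    intro x
    simp only [hφdef, realPart_I_smul, imaginaryPart_I_smul, NegMemClass.coe_neg]
    rw [hζneg _ (ℑ x).2.isStarNormal, smul_add, smul_smul, Complex.I_mul_I, neg_one_smul]
    abel
  have φrsmul : ∀ (r : ℝ) (x : A), φ (r • x) = r • φ x := by
    intro r x
    have h1 : (ℜ (r • x) : A) = r • (ℜ x : A) := by rw [map_smul]; rfl
    have h2 : (ℑ (r • x) : A) = r • (ℑ x : A) := by rw [map_smul]; rfl
    simp only [hφdef, h1, h2]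
    rw [hrsmul _ _ (ℜ x).2.isStarNormal, hrsmul _ _ (ℑ x).2.isStarNormal, smul_add,
      smul_comm r Complex.I]
  have φsmul : ∀ (c : ℂ) (x : A), φ (c • x) = c • φ x := by
    intro c x
    have hx : c • x = (c.re : ℝ) • x + (c.im : ℝ) • (Complex.I • x) := by
      rw [← Complex.coe_smul, ← Complex.coe_smul, smul_smul, ← add_smul]
      norm_num [Complex.re_add_im]
    have hy : c • φ x = (c.re : ℝ) • φ x + (c.im : ℝ) • (Complex.I • φ x) := by
      rw [← Complex.coe_smul, ← Complex.coe_smul, smul_smul, ← add_smul]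
      norm_num
    rw [hx, φadd, φrsmul, φrsmul, φI, hy]
  have φneg : ∀ x : A, φ (-x) = - φ x := by
    intro x
    have := φrsmul (-1) x
    simpa using this
  have φmul_uni : ∀ u v : A, u ∈ unitary A → v ∈ unitary A → φ (u * v) = φ u * φ v := by
    intro u v hu hv
    rw [φnormal _ (isStarNormal_of_mem_unitary (mul_mem hu hv)), huni u v hu hv,
      φnormal _ (isStarNormal_of_mem_unitary hu), φnormal _ (isStarNormal_of_mem_unitary hv)]
  have key : ∀ a b : A, IsSelfAdjoint a → IsSelfAdjoint b → ‖a‖ ≤ 2 → ‖b‖ ≤ 2 →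
      φ (a * b) = φ a * φ b := by
    intro a b haA hbA ha2 hb2
    obtain ⟨u, hu, hau⟩ := aux_exists_unitary haA ha2
    obtain ⟨v, hv, hbv⟩ := aux_exists_unitary hbA hb2
    have hu' := Unitary.star_mem hu
    have hv' := Unitary.star_mem hv
    subst hau; subst hbv
    have e1 : φ ((u + star u) * (v + star v)) =
        φ (u*v) + φ (u*star v) + (φ (star u*v) + φ (star u*star v)) := by
      rw [add_mul, mul_add, mul_add, φadd, φadd, φadd]
    rw [e1, φadd u (star u), φadd v (star v), φmul_uni u v hu hv, φmul_uni u _ hu hv',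
      φmul_uni _ v hu' hv, φmul_uni _ _ hu' hv']
    noncomm_ring
  have φmul_sa : ∀ a b : A, IsSelfAdjoint a → IsSelfAdjoint b → φ (a * b) = φ a * φ b := by
    intro a b haA hbA
    rcases eq_or_ne a 0 with rfl|ha0
    · simp [φ0]
    rcases eq_or_ne b 0 with rfl|hb0
    · simp [φ0]
    have hna : (0:ℝ) < ‖a‖ := norm_pos_iff.mpr ha0
    have hnb : (0:ℝ) < ‖b‖ := norm_pos_iff.mpr hb0
    set r : ℝ := 2/‖a‖ with hrdef
    set s : ℝ := 2/‖b‖ with hsdef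
    have hr : 0 < r := by positivity
    have hs : 0 < s := by positivity
    have hra : ‖r • a‖ ≤ 2 := by
      rw [norm_smul, Real.norm_eq_abs, abs_of_pos hr, hrdef, div_mul_cancel₀]
      · exact hna.ne'
    have hsb : ‖s • b‖ ≤ 2 := by
      rw [norm_smul, Real.norm_eq_abs, abs_of_pos hs, hsdef, div_mul_cancel₀]
      · exact hnb.ne'
    have h1 := key (r • a) (s • b) (IsSelfAdjoint.smul (star_trivial r) haA) (IsSelfAdjoint.smul (star_trivial s) hbA) hra hsb
    have h2 : (r • a) * (s • b) = (r * s) • (a * b) := by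
      rw [smul_mul_assoc, mul_smul_comm, smul_smul]
    rw [h2, φrsmul, φrsmul, φrsmul, smul_mul_assoc, mul_smul_comm, smul_smul] at h1
    exact smul_right_injective B (mul_pos hr hs).ne' h1
  have φmul : ∀ x y : A, φ (x * y) = φ x * φ y := by
    intro x y
    have hx : x = (ℜ x : A) + Complex.I • (ℑ x : A) :=
      (realPart_add_I_smul_imaginaryPart x).symm
    have hy : y = (ℜ y : A) + Complex.I • (ℑ y : A) :=
      (realPart_add_I_smul_imaginaryPart y).symm
    set a := (ℜ x : A) with hadef
    set b := (ℑ x : A) with hbdef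
    set c := (ℜ y : A) with hcdef
    set d := (ℑ y : A) with hddef
    have haA : IsSelfAdjoint a := (ℜ x).2
    have hbA : IsSelfAdjoint b := (ℑ x).2
    have hcA : IsSelfAdjoint c := (ℜ y).2
    have hdA : IsSelfAdjoint d := (ℑ y).2
    have φsub : ∀ p q : A, φ (p - q) = φ p - φ q := by
      intro p q
      rw [sub_eq_add_neg, φadd, φneg, ← sub_eq_add_neg]
    have hexp : x * y = a * c + Complex.I • (a * d) + Complex.I • (b * c) - b * d := by
      conv_lhs => rw [hx, hy]
      simp only [add_mul, mul_add, smul_add, smul_mul_assoc, mul_smul_comm, smul_smul,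
        Complex.I_mul_I, neg_one_smul]
      abel
    have hφx : φ x = φ a + Complex.I • φ b := by
      conv_lhs => rw [hx]
      rw [φadd, φI]
    have hφy : φ y = φ c + Complex.I • φ d := by
      conv_lhs => rw [hy]
      rw [φadd, φI]
    rw [hφx, hφy, hexp, φsub, φadd, φadd, φI, φI, φmul_sa a c haA hcA,
      φmul_sa a d haA hdA, φmul_sa b c hbA hcA, φmul_sa b d hbA hdA]
    simp only [add_mul, mul_add, smul_add, smul_mul_assoc, mul_smul_comm, smul_smul,
      Complex.I_mul_I, neg_one_smul]
    abel
  have φ1 : φ 1 = 1 := by rw [φsa 1 (IsSelfAdjoint.one A), hone]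
  have φstar : ∀ x : A, φ (star x) = star (φ x) := by
    intro x
    have h1 : (ℜ (star x) : A) = (ℜ x : A) := by
      rw [realPart_apply_coe, realPart_apply_coe, star_star, add_comm]
    have h2 : (ℑ (star x) : A) = -(ℑ x : A) := by
      rw [imaginaryPart_apply_coe, imaginaryPart_apply_coe, star_star]
      module
    simp only [hφdef, h1, h2]
    rw [hζneg _ (ℑ x).2.isStarNormal, star_add, star_smul, Complex.star_def, Complex.conj_I,
      (hζsa _ (ℜ x).2).star_eq, (hζsa _ (ℑ x).2).star_eq, smul_neg, neg_smul]
  let Φ : A →⋆ₐ[ℂ] B :=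
    { toFun := φ
      map_one' := φ1
      map_mul' := φmul
      map_zero' := φ0
      map_add' := φadd
      commutes' := fun c => by
        show φ (algebraMap ℂ A c) = algebraMap ℂ B c
        rw [Algebra.algebraMap_eq_smul_one, Algebra.algebraMap_eq_smul_one, φsmul, φ1]
      map_star' := φstar }
  exact ⟨Φ, φnormal, φkey⟩
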